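/- Suppose the k-bilinear map ⟪−,−⟫ : A × A → A ⊗ A satisfies the antisymmetry condition ⟪b,a⟫ = −τ(⟪a,b⟫). Then ⟪−,−⟫ satisfies the double Jacobi identity if and only if its associated trilinear maps satisfy the quintic Stasheff identity n(n(a,f,b), g, c) + n(a, m(f,b,g), c) − n(a, f, n(b,g,c)) = 0 for all a, b, c ∈ A and f, g ∈ A*. (This is the equivalence, proved in Theorem 5.1 using the double-Jacobi pairing computation of Fact 5.3, between condition (iii) of a double Poisson bracket and the Stasheff identity SI(5) restricted to the component A ⊗ A*[−1] ⊗ A ⊗ A*[−1] ⊗ A paired with A*[−1].) -/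

import Mathlib

open TensorProduct

set_option linter.unusedSectionVars false
set_option maxHeartbeats 1000000

noncomputable section

variable {k : Type*} [Field k] [CharZero k]
variable {A : Type*} [NonUnitalRing A] [Module k A] [SMulCommClass k A A] [IsScalarTower k A A]

/-- Outer left action of `A` on `A ⊗ A`: `a · (u ⊗ v) = (a*u) ⊗ v`. -/
def lAct (a : A) : A ⊗[k] A →ₗ[k] A ⊗[k] A :=
  TensorProduct.map (LinearMap.mulLeft k a) LinearMap.id

/-- Outer right action of `A` on `A ⊗ A`: `(u ⊗ v) · b = u ⊗ (v*b)`. -/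
def rAct (b : A) : A ⊗[k] A →ₗ[k] A ⊗[k] A :=
  TensorProduct.map LinearMap.id (LinearMap.mulRight k b)

/-- `⟪a, u ⊗ v⟫_L = ⟪a,u⟫ ⊗ v`, extended linearly. -/
def brL (br : A →ₗ[k] A →ₗ[k] A ⊗[k] A) (a : A) :
    A ⊗[k] A →ₗ[k] (A ⊗[k] A) ⊗[k] A :=
  TensorProduct.map (br a) LinearMap.id

/-- The cyclic permutation `σ(u ⊗ v ⊗ w) = w ⊗ u ⊗ v` on `(A ⊗ A) ⊗ A`. -/
def cyc : (A ⊗[k] A) ⊗[k] A →ₗ[k] (A ⊗[k] A) ⊗[k] A :=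
  (TensorProduct.assoc k A A A).symm.toLinearMap ∘ₗ
    (TensorProduct.comm k (A ⊗[k] A) A).toLinearMap

/-- A double Poisson bracket: antisymmetry, Leibniz, and double Jacobi. -/
def IsDoublePoisson (br : A →ₗ[k] A →ₗ[k] A ⊗[k] A) : Prop :=
  (∀ a b : A, br b a = - (TensorProduct.comm k A A) (br a b)) ∧
  (∀ a b c : A, br a (b * c) = rAct c (br a b) + lAct b (br a c)) ∧
  (∀ a b c : A,
    brL br a (br b c) + cyc (brL br b (br c a)) + cyc (cyc (brL br c (br a b))) = 0)

/-- `(f ⊗ g) : A ⊗ A → k`. -/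
def pair2 (f g : Module.Dual k A) : A ⊗[k] A →ₗ[k] k :=
  TensorProduct.lift ((LinearMap.mul k k).compl₁₂ f g)

/-- The associated trilinear map `n(a,f,b) = (id ⊗ f)(⟪b,a⟫)`. -/
def nMap (br : A →ₗ[k] A →ₗ[k] A ⊗[k] A) (a : A) (f : Module.Dual k A) (b : A) : A :=
  TensorProduct.rid k A (TensorProduct.map LinearMap.id f (br b a))

/-- The associated trilinear map `m(f,a,g)(b) = (f ⊗ g)(⟪b,a⟫)`. -/
def mMap (br : A →ₗ[k] A →ₗ[k] A ⊗[k] A) (f : Module.Dual k A) (a : A)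
    (g : Module.Dual k A) : Module.Dual k A :=
  pair2 f g ∘ₗ br.flip a

/-- The left action of `A` on `A* = Hom_k(A,k)`: `(a·f)(c) = f(c*a)`. -/
def dL (a : A) (f : Module.Dual k A) : Module.Dual k A :=
  f ∘ₗ LinearMap.mulRight k a

/-- The right action of `A` on `A* = Hom_k(A,k)`: `(f·b)(c) = f(b*c)`. -/
def dR (f : Module.Dual k A) (b : A) : Module.Dual k A :=
  f ∘ₗ LinearMap.mulLeft k b

section Contr

variable {M N : Type*} [AddCommGroup M] [Module k M] [AddCommGroup N] [Module k N]

/-- Contract the right factor with a functional. -/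
def cR (f : Module.Dual k N) : M ⊗[k] N →ₗ[k] M :=
  (TensorProduct.rid k M).toLinearMap ∘ₗ TensorProduct.map LinearMap.id f

@[simp] lemma cR_tmul (f : Module.Dual k N) (m : M) (n : N) :
    cR f (m ⊗ₜ[k] n) = f n • m := by
  simp [cR]

/-- Contract the left factor with a functional. -/
def cL (f : Module.Dual k M) : M ⊗[k] N →ₗ[k] N :=
  (TensorProduct.lid k N).toLinearMap ∘ₗ TensorProduct.map f LinearMap.id

@[simp] lemma cL_tmul (f : Module.Dual k M) (m : M) (n : N) :
    cL f (m ⊗ₜ[k] n) = f m • n := by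
  simp [cL]

lemma sep (t : M ⊗[k] N) (h : ∀ f : Module.Dual k N, cR f t = 0) : t = 0 := by
  classical
  let 𝒞 := Module.Basis.ofVectorSpace k N
  apply (TensorProduct.equivFinsuppOfBasisRight (M := M) 𝒞).injective
  rw [map_zero]
  ext i
  have key : ∀ s : M ⊗[k] N,
      (TensorProduct.equivFinsuppOfBasisRight (M := M) 𝒞) s i = cR (𝒞.coord i) s := by
    intro s
    induction s using TensorProduct.induction_on with
    | zero => simp
    | tmul m n =>
        simp [TensorProduct.equivFinsuppOfBasisRight_apply_tmul_apply, Module.Basis.coord_apply]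
    | add x y hx hy => simp [map_add, hx, hy]
  rw [key, h]
  simp

lemma cL_comm (f : Module.Dual k M) (t : N ⊗[k] M) :
    cL f ((TensorProduct.comm k N M) t) = cR f t := by
  induction t using TensorProduct.induction_on with
  | zero => simp
  | tmul m n => simp
  | add x y hx hy => simp [map_add, hx, hy]

end Contr


section BracketLemmas

variable (br : A →ₗ[k] A →ₗ[k] A ⊗[k] A)

lemma nMap_eq (a : A) (f : Module.Dual k A) (b : A) : nMap br a f b = cR f (br b a) := rfl

lemma mMap_eq (f : Module.Dual k A) (a : A) (g : Module.Dual k A) (c : A) :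
    mMap br f a g c = pair2 f g (br c a) := rfl

@[simp] lemma pair2_tmul (f g : Module.Dual k A) (x y : A) :
    pair2 f g (x ⊗ₜ[k] y) = f x * g y := by
  simp [pair2]

lemma pair2_comm (f g : Module.Dual k A) (t : A ⊗[k] A) :
    pair2 f g ((TensorProduct.comm k A A) t) = pair2 g f t := by
  induction t using TensorProduct.induction_on with
  | zero => simp
  | tmul x y => simp [mul_comm]
  | add x y hx hy => simp [map_add, hx, hy]

lemma cL_negf {M N : Type*} [AddCommGroup M] [Module k M] [AddCommGroup N] [Module k N]
    (f : Module.Dual k M) (t : M ⊗[k] N) : cL (-f) t = - cL f t := by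
  induction t using TensorProduct.induction_on with
  | zero => simp
  | tmul m n => simp
  | add x y hx hy => simp [map_add, hx, hy]; abel

@[simp] lemma brL_tmul (a u v : A) : brL br a (u ⊗ₜ[k] v) = (br a u) ⊗ₜ[k] v := by
  simp [brL]

lemma cyc_tmul (x y z : A) : cyc ((x ⊗ₜ[k] y) ⊗ₜ[k] z) = (z ⊗ₜ[k] x) ⊗ₜ[k] y := by
  simp [cyc]

lemma term1 (a : A) (f g : Module.Dual k A) (t : A ⊗[k] A) :
    cR f (cR g (brL br a t)) = cR f (br a (cR g t)) := by
  induction t using TensorProduct.induction_on with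
  | zero => simp
  | tmul u v => simp
  | add x y hx hy => simp [map_add, hx, hy]

lemma phi_cyc (f g : Module.Dual k A) (X : A ⊗[k] A) (z : A) :
    cR f (cR g (cyc (X ⊗ₜ[k] z))) = pair2 f g X • z := by
  induction X using TensorProduct.induction_on with
  | zero => simp [TensorProduct.zero_tmul]
  | tmul x y => rw [cyc_tmul]; simp [smul_smul, mul_comm]
  | add x y hx hy =>
      rw [TensorProduct.add_tmul, map_add, map_add, map_add, hx, hy, map_add, add_smul]

lemma phi_cyc2 (f g : Module.Dual k A) (X : A ⊗[k] A) (z : A) :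
    cR f (cR g (cyc (cyc (X ⊗ₜ[k] z)))) = f z • cL g X := by
  induction X using TensorProduct.induction_on with
  | zero => simp [TensorProduct.zero_tmul]
  | tmul x y => rw [cyc_tmul, cyc_tmul]; simp [smul_smul, mul_comm]
  | add x y hx hy =>
      rw [TensorProduct.add_tmul, map_add, map_add, map_add, map_add, hx, hy, map_add, smul_add]

lemma term2 (b : A) (f g : Module.Dual k A) (t : A ⊗[k] A) :
    cR f (cR g (cyc (brL br b t))) = cL (pair2 f g ∘ₗ br b) t := by
  induction t using TensorProduct.induction_on with
  | zero => simp
  | tmul u v => rw [brL_tmul, phi_cyc]; simp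
  | add x y hx hy => simp [map_add, hx, hy]

lemma term3 (c : A) (f g : Module.Dual k A) (t : A ⊗[k] A) :
    cR f (cR g (cyc (cyc (brL br c t)))) = cL g (br c (cR f t)) := by
  induction t using TensorProduct.induction_on with
  | zero => simp
  | tmul u v => rw [brL_tmul, phi_cyc2]; simp
  | add x y hx hy => simp [map_add, hx, hy]

lemma main_pairing
    (h1 : ∀ a b : A, br b a = - (TensorProduct.comm k A A) (br a b))
    (a b c : A) (f g : Module.Dual k A) :
    cR g (cR f (brL br c (br b a) + cyc (brL br b (br a c)) + cyc (cyc (brL br a (br c b)))))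
      = nMap br (nMap br a f b) g c + nMap br a (mMap br f b g) c
        - nMap br a f (nMap br b g c) := by
  rw [map_add, map_add, map_add, map_add]
  rw [term1, term2, term3]
  have p1 : cR g (br c (cR f (br b a))) = nMap br (nMap br a f b) g c := rfl
  have hfun : (pair2 g f ∘ₗ br b) = -(mMap br f b g) := by
    apply LinearMap.ext; intro x
    have hx : br b x = - (TensorProduct.comm k A A) (br x b) := h1 x b
    simp only [LinearMap.comp_apply, LinearMap.neg_apply, hx, map_neg, pair2_comm]
    rw [mMap_eq]
  have p2 : cL (pair2 g f ∘ₗ br b) (br a c) = nMap br a (mMap br f b g) c := by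
    rw [hfun, cL_negf]
    have hac : br a c = - (TensorProduct.comm k A A) (br c a) := h1 c a
    rw [hac, map_neg, cL_comm, neg_neg]
    rfl
  have p3 : cL f (br a (cR g (br c b))) = - nMap br a f (nMap br b g c) := by
    have hw : br a (cR g (br c b)) =
        - (TensorProduct.comm k A A) (br (cR g (br c b)) a) := h1 (cR g (br c b)) a
    rw [hw, map_neg, cL_comm]
    rfl
  rw [p1, p2, p3]
  abel

end BracketLemmas

/-- Under antisymmetry, the double Jacobi identity is equivalent to
the quintic Stasheff identity
`n(n(a,f,b), g, c) + n(a, m(f,b,g), c) − n(a, f, n(b,g,c)) = 0`. -/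
theorem doubleJacobi_iff_quinticStasheff (br : A →ₗ[k] A →ₗ[k] A ⊗[k] A)
    (h1 : ∀ a b : A, br b a = - (TensorProduct.comm k A A) (br a b)) :
    (∀ a b c : A,
      brL br a (br b c) + cyc (brL br b (br c a)) + cyc (cyc (brL br c (br a b))) = 0) ↔
    (∀ (a b c : A) (f g : Module.Dual k A),
      nMap br (nMap br a f b) g c + nMap br a (mMap br f b g) c
        - nMap br a f (nMap br b g c) = 0) := by
  constructor
  · intro hJ a b c f g
    have h := hJ c b a
    have hm := main_pairing br h1 a b c f g
    rw [h, map_zero, map_zero] at hm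
    exact hm.symm
  · intro hS a b c
    apply sep
    intro f₀
    apply sep
    intro g₀
    have hm := main_pairing br h1 c b a f₀ g₀
    rw [hm]
    exact hS c b a f₀ g₀
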